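/- Let U : ℝ × ℝ → ℝ be continuous, strictly decreasing in x, with ∂_x U(t,x) ≤ -β for all t ∈ ℝ and x ∈ [-C, C] (β, C > 0), and suppose U(t,x) is almost periodic in t uniformly for x ∈ [-C, C]. If z : ℝ → [-C, C] satisfies U(t, z(t)) = 1/2 for all t, then z is almost periodic. -/
import Mathlib


def AlmostPeriodic (g : ℝ → ℝ) : Prop :=
  ∀ ε > 0, ∃ L > 0, ∀ a : ℝ, ∃ τ ∈ Set.Icc a (a + L), ∀ t : ℝ, |g (t + τ) - g t| < ε

noncomputable def seqAux (A : ℝ → ℝ) : ℕ → ℝ × ℝ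
  | 0 => (0, 0)
  | n+1 =>
    let p := seqAux A n
    (A p.2 + |p.2| + 1/2, max p.2 (|A p.2 + |p.2| + 1/2|))

lemma bochner_to_bohr (F : ℝ → ℝ → ℝ) (K : Set ℝ)
    (hap : ∀ t' : ℕ → ℝ, ∃ φ : ℕ → ℕ, StrictMono φ ∧ ∃ V : ℝ → ℝ → ℝ,
      ∀ ε > (0:ℝ), ∃ N : ℕ, ∀ n ≥ N, ∀ t : ℝ, ∀ x ∈ K,
        |F (t + t' (φ n)) x - V t x| < ε)
    (δ : ℝ) (hδ : 0 < δ) :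
    ∃ L > 0, ∀ a : ℝ, ∃ τ ∈ Set.Icc a (a + L), ∀ t : ℝ, ∀ x ∈ K,
      |F (t + τ) x - F t x| < δ := by
  by_contra hbad
  push_neg at hbad
  have key : ∀ M : ℝ, ∃ a : ℝ, ∀ τ ∈ Set.Icc a (a + (2*|M|+1)), ∃ t : ℝ, ∃ x ∈ K,
      δ ≤ |F (t + τ) x - F t x| := fun M => hbad (2*|M|+1) (by positivity)
  choose A hA using key
  set g : ℕ → ℝ := fun n => (seqAux A n).1 with hg
  set Mx : ℕ → ℝ := fun n => (seqAux A n).2 with hMx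
  have hstep : ∀ n, g (n+1) = A (Mx n) + |Mx n| + 1/2 := by
    intro n; simp [hg, hMx, seqAux]
  have hstep2 : ∀ n, Mx (n+1) = max (Mx n) (|g (n+1)|) := by
    intro n; simp [hg, hMx, seqAux]
  have hMnonneg : ∀ n, 0 ≤ Mx n := by
    intro n; induction n with
    | zero => simp [hMx, seqAux]
    | succ k ih => rw [hstep2]; exact le_trans ih (le_max_left _ _)
  have hgbd : ∀ n, |g n| ≤ Mx n := by
    intro n; cases n with
    | zero => simp [hg, hMx, seqAux]
    | succ k => rw [hstep2]; exact le_max_right _ _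
  have hMmono : Monotone Mx :=
    monotone_nat_of_le_succ (fun n => by rw [hstep2]; exact le_max_left _ _)
  have hbd : ∀ m n, m ≤ n → |g m| ≤ Mx n := fun m n h => (hgbd m).trans (hMmono h)
  have hnot : ∀ m n, m < n → ∃ t : ℝ, ∃ x ∈ K, δ ≤ |F (t + (g n - g m)) x - F t x| := by
    intro m n hmn
    obtain ⟨k, rfl⟩ : ∃ k, n = k + 1 := ⟨n - 1, by omega⟩
    have hm : m ≤ k := by omega
    have habs := abs_le.mp (hbd m k hm)
    have h2 : |Mx k| = Mx k := abs_of_nonneg (hMnonneg k)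
    refine hA (Mx k) (g (k+1) - g m) (Set.mem_Icc.mpr ⟨?_, ?_⟩)
    · rw [hstep k, h2]; linarith [habs.2]
    · rw [hstep k, h2]; linarith [habs.1]
  obtain ⟨φ, hφ, V, hV⟩ := hap g
  obtain ⟨N, hN⟩ := hV (δ/2) (by linarith)
  obtain ⟨t, x, hx, hge⟩ := hnot (φ N) (φ (N+1)) (hφ (Nat.lt_succ_self N))
  have h1 := hN N le_rfl (t - g (φ N)) x hx
  have h2 := hN (N+1) (Nat.le_succ N) (t - g (φ N)) x hx
  have e1 : t - g (φ N) + g (φ N) = t := by ring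
  have e2 : t - g (φ N) + g (φ (N+1)) = t + (g (φ (N+1)) - g (φ N)) := by ring
  rw [e1] at h1
  rw [e2] at h2
  have htri := abs_sub_le (F (t + (g (φ (N+1)) - g (φ N))) x) (V (t - g (φ N)) x) (F t x)
  have h1' : |V (t - g (φ N)) x - F t x| < δ/2 := by rw [abs_sub_comm]; exact h1
  linarith

lemma lip_below (f : ℝ → ℝ) (C β : ℝ) (hβ : 0 < β) (hf : Continuous f)
    (hderiv : ∀ x ∈ Set.Icc (-C) C, deriv f x ≤ -β) :
    ∀ x ∈ Set.Icc (-C) C, ∀ y ∈ Set.Icc (-C) C, β * |y - x| ≤ |f y - f x| := by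
  have main : ∀ x ∈ Set.Icc (-C) C, ∀ y ∈ Set.Icc (-C) C, x < y →
      β * (y - x) ≤ f x - f y := by
    intro x hx y hy hxy
    have hsub : Set.Icc x y ⊆ Set.Icc (-C) C := Set.Icc_subset_Icc hx.1 hy.2
    have hdiff : ∀ c ∈ Set.Ioo x y, DifferentiableAt ℝ f c := by
      intro c hc
      by_contra h
      have hz := deriv_zero_of_not_differentiableAt h
      have := hderiv c (hsub (Set.Ioo_subset_Icc_self hc))
      rw [hz] at this
      linarith
    obtain ⟨c, hc, hceq⟩ := exists_deriv_eq_slope f hxy hf.continuousOn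
      (fun c hc => (hdiff c hc).differentiableWithinAt)
    have hle : deriv f c ≤ -β := hderiv c (hsub (Set.Ioo_subset_Icc_self hc))
    rw [hceq] at hle
    have hy' : 0 < y - x := by linarith
    have := (div_le_iff₀ hy').mp hle
    nlinarith
  intro x hx y hy
  rcases lt_trichotomy x y with h | h | h
  · have hm := main x hx y hy h
    have hpos : 0 < y - x := by linarith
    have hpos2 : 0 < f x - f y := by nlinarith
    rw [abs_of_pos hpos, abs_sub_comm, abs_of_pos hpos2]
    linarith
  · simp [h]
  · have hm := main y hy x hx h
    have hneg : y - x < 0 := by linarith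
    have hpos2 : 0 < f y - f x := by nlinarith
    rw [abs_of_neg hneg, abs_of_pos hpos2]
    linarith

theorem stmt_19 (U : ℝ → ℝ → ℝ) (C β : ℝ) (hC : 0 < C) (hβ : 0 < β)
    (hUcont : Continuous fun p : ℝ × ℝ => U p.1 p.2)
    (hmono : ∀ t : ℝ, StrictAnti (U t))
    (hUx : ∀ t : ℝ, ∀ x ∈ Set.Icc (-C) C, deriv (fun y => U t y) x ≤ -β)
    (hap : ∀ t' : ℕ → ℝ, ∃ φ : ℕ → ℕ, StrictMono φ ∧ ∃ V : ℝ → ℝ → ℝ,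
      ∀ ε > (0:ℝ), ∃ N : ℕ, ∀ n ≥ N, ∀ t : ℝ, ∀ x ∈ Set.Icc (-C) C,
        |U (t + t' (φ n)) x - V t x| < ε)
    (z : ℝ → ℝ) (hzc : Continuous z) (hzr : ∀ t, z t ∈ Set.Icc (-C) C)
    (hlevel : ∀ t, U t (z t) = 1 / 2) :
    AlmostPeriodic z := by
  intro ε hε
  have hδ : 0 < β * ε := mul_pos hβ hε
  obtain ⟨L, hL, hτ⟩ := bochner_to_bohr U (Set.Icc (-C) C) hap (β*ε) hδ
  refine ⟨L, hL, fun a => ?_⟩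
  obtain ⟨τ, hτm, hτp⟩ := hτ a
  refine ⟨τ, hτm, fun t => ?_⟩
  have hz1 := hzr t
  have hz2 := hzr (t+τ)
  have hlip := lip_below (U t) C β hβ (hUcont.comp (Continuous.prodMk_right t))
    (hUx t) (z t) hz1 (z (t+τ)) hz2
  have h1 : |U (t+τ) (z (t+τ)) - U t (z (t+τ))| < β*ε := hτp t (z (t+τ)) hz2
  rw [hlevel (t+τ)] at h1
  have h3 : |U t (z (t+τ)) - U t (z t)| < β*ε := by
    rw [hlevel t, abs_sub_comm]; exact h1
  exact (mul_lt_mul_iff_right₀ hβ).mp (hlip.trans_lt h3)
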